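/- In the expansion of det(M) as a sum over permutations of the index set of pairs, the term corresponding to the identity permutation equals ((1-qt)(1+q²t))^{C(n,2)}, and every other term is divisible by (q-1) in ℤ[q,t]; consequently det(M) ≠ 0 in ℤ[q^{±1}, t^{±1}]. -/

import Mathlib

open LaurentPolynomial

/-- Index set for the Lawrence-Krammer basis: pairs `(j,k)` with `0 ≤ j < k ≤ n-1`
(0-based indexing of the punctures). -/
def LKIdx (n : ℕ) := {p : Fin n × Fin n // p.1 < p.2}

instance (n : ℕ) : Fintype (LKIdx n) := by unfold LKIdx; infer_instance
instance (n : ℕ) : DecidableEq (LKIdx n) := by unfold LKIdx; infer_instance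

/-- Kronecker delta on a pair of indices. -/
def lkDelta {R : Type*} [CommRing R] (a b x y : ℕ) : R :=
  if a = x ∧ b = y then 1 else 0

/-- The coefficient of `v_{a,b}` in `ρ(σ_i)·v_{j,k}` (0-based indices), following the
explicit formula for the Lawrence-Krammer representation:
`ρ(σ_i)v_{j,k} = v_{j,k}` if `i ∉ {j-1,j,k-1,k}`;
`q v_{i,k} + (q²-q) v_{i,j} + (1-q) v_{j,k}` if `i = j-1`;
`v_{j+1,k}` if `i = j ≠ k-1`; `q v_{j,i} + (1-q) v_{j,k} - (q²-q)t v_{i,k}` if `i = k-1 ≠ j`;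
`v_{j,k+1}` if `i = k`; `-tq² v_{j,k}` if `i = j = k-1`. -/
def lkEntry {R : Type*} [CommRing R] (q t : R) (i a b j k : ℕ) : R :=
  if i + 1 = j then
    q * lkDelta a b i k + (q ^ 2 - q) * lkDelta a b i j + (1 - q) * lkDelta a b j k
  else if i = j ∧ i + 1 = k then -(t * q ^ 2) * lkDelta a b j k
  else if i = j then lkDelta a b (j + 1) k
  else if i + 1 = k then
    q * lkDelta a b j i + (1 - q) * lkDelta a b j k - (q ^ 2 - q) * t * lkDelta a b i k
  else if i = k then lkDelta a b j (k + 1)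
  else lkDelta a b j k

/-- The matrix of `ρ(σ_i)` on the free module with basis `v_{j,k}`, `0 ≤ j < k < n`. -/
def lkMat {R : Type*} [CommRing R] (q t : R) (n : ℕ) (i : ℕ) :
    Matrix (LKIdx n) (LKIdx n) R :=
  fun p p' => lkEntry q t i p.1.1 p.1.2 p'.1.1 p'.1.2

/-- The Laurent polynomial ring `ℤ[q^{±1}, t^{±1}]`. -/
abbrev LKRing : Type := LaurentPolynomial (LaurentPolynomial ℤ)

/-- The variable `q` in `ℤ[q^{±1}, t^{±1}]`. -/
noncomputable def qLK : LKRing := T 1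

/-- The variable `t` in `ℤ[q^{±1}, t^{±1}]`. -/
noncomputable def tLK : LKRing := C (T 1)

/-- The entry `M_{(i,j),(k,l)}` of the intersection-form matrix (indices satisfy
`i < j`, `k < l`): `(1-qt)(1+q²t)` if `k=i, j=l`; `-q²t²(q-1)` if `i=k<j<l` or `i<k<j=l`;
`-(q-1)` if `k=i<l<j` or `k<i<j=l`; `t(q-1)` if `i<j=k<l`; `q²t(q-1)` if `k<l=i<j`;
`-t(q-1)²(1+qt)` if `i<k<j<l`; `(q-1)²(1+qt)` if `k<i<l<j`; `0` otherwise. -/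
def lkFormEntry {R : Type*} [CommRing R] (q t : R) (i j k l : ℕ) : R :=
  if i = k ∧ j = l then (1 - q * t) * (1 + q ^ 2 * t)
  else if (i = k ∧ j < l) ∨ (i < k ∧ j = l) then -(q ^ 2 * t ^ 2 * (q - 1))
  else if (i = k ∧ l < j) ∨ (k < i ∧ j = l) then -(q - 1)
  else if j = k then t * (q - 1)
  else if l = i then q ^ 2 * t * (q - 1)
  else if i < k ∧ k < j ∧ j < l then -(t * (q - 1) ^ 2 * (1 + q * t))
  else if k < i ∧ i < l ∧ l < j then (q - 1) ^ 2 * (1 + q * t)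
  else 0

/-- The matrix `M` of intersection products, indexed by pairs `(i,j)` with `i < j`. -/
def lkFormMat {R : Type*} [CommRing R] (q t : R) (n : ℕ) :
    Matrix (LKIdx n) (LKIdx n) R :=
  fun p p' => lkFormEntry q t p.1.1 p.1.2 p'.1.1 p'.1.2

/-! ### Auxiliary lemmas -/

def lkIdxEquiv (n : ℕ) : LKIdx n ≃ Σ j : Fin n, Fin j.val where
  toFun p := ⟨p.1.2, ⟨p.1.1, p.2⟩⟩
  invFun x := ⟨(⟨x.2.1, x.2.isLt.trans x.1.isLt⟩, x.1), x.2.isLt⟩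
  left_inv _ := rfl
  right_inv _ := rfl

theorem lkIdx_card (n : ℕ) : Fintype.card (LKIdx n) = n.choose 2 := by
  rw [Fintype.card_congr (lkIdxEquiv n), Fintype.card_sigma]
  simp only [Fintype.card_fin]
  rw [show (∑ x : Fin n, (x : ℕ)) = ∑ i ∈ Finset.range n, i from
    Fin.sum_univ_eq_sum_range (fun i => i) n, Finset.sum_range_id, Nat.choose_two_right]

theorem lkFormEntry_dvd {R : Type*} [CommRing R] (q t : R) (i j k l : ℕ)
    (h : ¬(i = k ∧ j = l)) : (q - 1) ∣ lkFormEntry q t i j k l := by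
  unfold lkFormEntry
  split_ifs
  · exact ⟨-(q ^ 2 * t ^ 2), by ring⟩
  · exact ⟨-1, by ring⟩
  · exact ⟨t, by ring⟩
  · exact ⟨q ^ 2 * t, by ring⟩
  · exact ⟨-(t * (q - 1) * (1 + q * t)), by ring⟩
  · exact ⟨(q - 1) * (1 + q * t), by ring⟩
  · exact dvd_zero _

def u2 : ℚˣ := ⟨2, 2⁻¹, by norm_num, by norm_num⟩

noncomputable def evT : LaurentPolynomial ℤ →+* ℚ :=
  AddMonoidAlgebra.liftNCRingHom (Int.castRingHom ℚ)
    ((Units.coeHom ℚ).comp (zpowersHom ℚˣ u2)) (fun _ _ => Commute.all _ _)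

noncomputable def evQT : LKRing →+* ℚ :=
  AddMonoidAlgebra.liftNCRingHom evT 1 (fun _ _ => Commute.all _ _)

theorem evQT_q : evQT qLK = 1 := by
  rw [qLK, T]
  show AddMonoidAlgebra.liftNC (evT : LaurentPolynomial ℤ →+ ℚ) 1 (AddMonoidAlgebra.single (1 : ℤ) (1 : LaurentPolynomial ℤ)) = 1
  rw [AddMonoidAlgebra.liftNC_single]
  simp

theorem evT_T : evT (T 1) = 2 := by
  rw [T]
  show AddMonoidAlgebra.liftNC ((Int.castRingHom ℚ) : ℤ →+ ℚ)
    ((Units.coeHom ℚ).comp (zpowersHom ℚˣ u2)) (AddMonoidAlgebra.single (1 : ℤ) (1 : ℤ)) = 2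
  rw [AddMonoidAlgebra.liftNC_single]
  simp [u2]

theorem evQT_t : evQT tLK = 2 := by
  rw [tLK]
  show AddMonoidAlgebra.liftNC (evT : LaurentPolynomial ℤ →+ ℚ) 1 (AddMonoidAlgebra.single (0 : ℤ) (T 1 : LaurentPolynomial ℤ)) = 2
  rw [AddMonoidAlgebra.liftNC_single]
  simp [evT_T]

theorem evQT_q_sub_one : evQT (qLK - 1) = 0 := by
  rw [map_sub, evQT_q, map_one, sub_self]
/-- In the permutation expansion of `det M`, the identity term equals
`((1-qt)(1+q²t))^{C(n,2)}`, every other term is divisible by `q-1`, and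
consequently `det M ≠ 0`. -/
theorem lk_form_det_expansion (n : ℕ) :
    ((Equiv.Perm.sign (1 : Equiv.Perm (LKIdx n)) : ℤ) •
        ∏ p : LKIdx n, lkFormMat qLK tLK n ((1 : Equiv.Perm (LKIdx n)) p) p =
      ((1 - qLK * tLK) * (1 + qLK ^ 2 * tLK)) ^ n.choose 2) ∧
    (∀ σ : Equiv.Perm (LKIdx n), σ ≠ 1 →
      (qLK - 1) ∣ (Equiv.Perm.sign σ : ℤ) • ∏ p : LKIdx n, lkFormMat qLK tLK n (σ p) p) ∧
    (lkFormMat qLK tLK n).det ≠ 0 := by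
  have h1 : (Equiv.Perm.sign (1 : Equiv.Perm (LKIdx n)) : ℤ) •
      ∏ p : LKIdx n, lkFormMat qLK tLK n ((1 : Equiv.Perm (LKIdx n)) p) p =
      ((1 - qLK * tLK) * (1 + qLK ^ 2 * tLK)) ^ n.choose 2 := by
    simp only [map_one, Units.val_one, one_smul, Equiv.Perm.one_apply]
    calc ∏ p : LKIdx n, lkFormMat qLK tLK n p p
        = ∏ _p : LKIdx n, ((1 - qLK * tLK) * (1 + qLK ^ 2 * tLK)) := by
          refine Finset.prod_congr rfl fun p _ => ?_
          simp [lkFormMat, lkFormEntry]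
      _ = ((1 - qLK * tLK) * (1 + qLK ^ 2 * tLK)) ^ n.choose 2 := by
          rw [Finset.prod_const, Finset.card_univ, lkIdx_card]
  have h2 : ∀ σ : Equiv.Perm (LKIdx n), σ ≠ 1 →
      (qLK - 1) ∣ (Equiv.Perm.sign σ : ℤ) • ∏ p : LKIdx n, lkFormMat qLK tLK n (σ p) p := by
    intro σ hσ
    obtain ⟨p, hp⟩ : ∃ p, σ p ≠ p := by
      by_contra h
      push_neg at h
      exact hσ (Equiv.ext h)
    have hne : ¬((((σ p).1.1 : ℕ) = ((p.1.1 : Fin n) : ℕ)) ∧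
        (((σ p).1.2 : ℕ) = ((p.1.2 : Fin n) : ℕ))) := by
      rintro ⟨ha, hb⟩
      exact hp (Subtype.ext (Prod.ext (Fin.val_injective ha) (Fin.val_injective hb)))
    have hdvd : (qLK - 1) ∣ lkFormMat qLK tLK n (σ p) p :=
      lkFormEntry_dvd _ _ _ _ _ _ hne
    have hprod : (qLK - 1) ∣ ∏ p : LKIdx n, lkFormMat qLK tLK n (σ p) p :=
      hdvd.trans (Finset.dvd_prod_of_mem _ (Finset.mem_univ p))
    rw [zsmul_eq_mul]
    exact hprod.mul_left _
  refine ⟨h1, h2, ?_⟩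
  intro h0
  have hdet : (lkFormMat qLK tLK n).det =
      ∑ σ : Equiv.Perm (LKIdx n),
        (Equiv.Perm.sign σ : ℤ) • ∏ p : LKIdx n, lkFormMat qLK tLK n (σ p) p := by
    rw [Matrix.det_apply]
    rfl
  have key : evQT (∑ σ : Equiv.Perm (LKIdx n),
      (Equiv.Perm.sign σ : ℤ) • ∏ p : LKIdx n, lkFormMat qLK tLK n (σ p) p) =
      (-3 : ℚ) ^ n.choose 2 := by
    rw [map_sum, Finset.sum_eq_single (1 : Equiv.Perm (LKIdx n))]
    · rw [h1, map_pow, map_mul, map_sub, map_add, map_mul, map_mul, map_pow,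
        evQT_q, evQT_t]
      norm_num
    · intro σ _ hσ
      obtain ⟨c, hc⟩ := h2 σ hσ
      rw [hc, map_mul, evQT_q_sub_one, zero_mul]
    · intro h
      exact absurd (Finset.mem_univ _) h
  rw [← hdet, h0, map_zero] at key
  exact absurd key.symm (pow_ne_zero _ (by norm_num))
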